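/- Let g ∈ L²(ℝ) and a,b > 0, and suppose g vanishes almost everywhere outside an interval I of length |I| ≤ 1/b. If there exist A, B > 0 with bA ≤ G(x) ≤ bB for almost every x ∈ ℝ − N_G, then {E_{mb}T_{na}g}_{m,n∈ℤ} is a frame for L²(ℝ−N_G) with bounds A and B; in particular it is a frame sequence with bounds A, B. -/

import Mathlib

noncomputable section
open MeasureTheory Complex Filter Set
open scoped ENNReal NNReal ComplexConjugate

/-- The Weyl–Heisenberg system function `E_{mb} T_{na} g`,
`x ↦ e^{2πi m b x} g (x - n a)`. -/
def whFun (g : ℝ → ℂ) (a b : ℝ) (m n : ℤ) : ℝ → ℂ := fun x =>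
  Complex.exp (2 * Real.pi * Complex.I * ((m : ℂ) * (b : ℂ)) * (x : ℂ)) * g (x - (n : ℝ) * a)

/-- `G(x) = ∑ₙ |g(x - n a)|²`, as a sum in `[0, ∞]`. -/
def Gfun (g : ℝ → ℂ) (a : ℝ) (x : ℝ) : ℝ≥0∞ :=
  ∑' n : ℤ, (‖g (x - (n : ℝ) * a)‖₊ : ℝ≥0∞) ^ 2

/-- `v` is a frame for the set `V` with bounds `A, B`:
`A‖f‖² ≤ ∑ᵢ |⟨f, vᵢ⟩|² ≤ B‖f‖²` for all `f ∈ V`. -/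
def IsFrameWithFor {H : Type*} [NormedAddCommGroup H] [InnerProductSpace ℂ H]
    {ι : Type*} (v : ι → H) (A B : ℝ) (V : Set H) : Prop :=
  ∀ f ∈ V, A * ‖f‖ ^ 2 ≤ ∑' i, ‖(inner ℂ f (v i) : ℂ)‖ ^ 2 ∧
    ∑' i, ‖(inner ℂ f (v i) : ℂ)‖ ^ 2 ≤ B * ‖f‖ ^ 2

/-- `v` is a frame sequence with bounds `A, B`: it is a frame for the closure of
the linear span of its range. -/
def IsFrameSeqWith {H : Type*} [NormedAddCommGroup H] [InnerProductSpace ℂ H]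
    {ι : Type*} (v : ι → H) (A B : ℝ) : Prop :=
  IsFrameWithFor v A B (closure ((Submodule.span ℂ (Set.range v) : Submodule ℂ H) : Set H))

open AddCircle in
lemma lintegral_sq_nnnorm_eq {α : Type*} [MeasurableSpace α] (μ : Measure α) (h : α → ℂ) :
    ∫⁻ x, (‖h x‖₊ : ℝ≥0∞) ^ 2 ∂μ = eLpNorm h 2 μ ^ 2 := by
  rw [eLpNorm_eq_lintegral_rpow_enorm_toReal (by norm_num) (by norm_num)]
  simp only [enorm_eq_nnnorm]
  have h2 : (2 : ℝ≥0∞).toReal = (2 : ℝ) := by norm_num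
  rw [h2]
  have hx : ∀ x, (‖h x‖₊ : ℝ≥0∞) ^ (2 : ℝ) = (‖h x‖₊ : ℝ≥0∞) ^ (2 : ℕ) := fun x => by
    rw [← ENNReal.rpow_natCast]; norm_num
  simp_rw [hx]
  rw [← ENNReal.rpow_natCast ((∫⁻ x, (‖h x‖₊ : ℝ≥0∞) ^ (2:ℕ) ∂μ) ^ (1/(2:ℝ))) 2,
    ← ENNReal.rpow_mul]
  norm_num

open AddCircle in
lemma memℒp_two_of {α : Type*} [MeasurableSpace α] {μ : Measure α} {h : α → ℂ}
    (hsm : AEStronglyMeasurable h μ) (hfin : (∫⁻ x, (‖h x‖₊ : ℝ≥0∞) ^ 2 ∂μ) ≠ ∞) :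
    MemLp h 2 μ := by
  refine ⟨hsm, lt_top_iff_ne_top.2 fun hc => hfin ?_⟩
  rw [lintegral_sq_nnnorm_eq, hc]
  simp

open AddCircle in
lemma parseval_interval {T : ℝ} (hT : 0 < T) (c₀ : ℝ) (h : ℝ → ℂ)
    (hsm : StronglyMeasurable h)
    (hfin : (∫⁻ x, (‖h x‖₊ : ℝ≥0∞) ^ 2) ≠ ∞)
    (hvan : ∀ᵐ x : ℝ, x ∉ Ioc c₀ (c₀ + T) → h x = 0) :
    ∑' m : ℤ, (‖∫ x : ℝ, (fourier (T := T) m (x : AddCircle T)) * h x‖₊ : ℝ≥0∞) ^ 2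
      = ENNReal.ofReal T * ∫⁻ x, (‖h x‖₊ : ℝ≥0∞) ^ 2 := by
  haveI : Fact (0 < T) := ⟨hT⟩
  set H : AddCircle T → ℂ := AddCircle.liftIoc T c₀ h with hH
  have Hmeas : Measurable H := by
    have he : H = (h ∘ (Subtype.val : Ioc c₀ (c₀ + T) → ℝ)) ∘ (AddCircle.measurableEquivIoc T c₀) := rfl
    rw [he]
    exact (hsm.measurable.comp measurable_subtype_coe).comp
      (AddCircle.measurableEquivIoc T c₀).measurable
  have hvan' : (fun x : ℝ => (‖h x‖₊ : ℝ≥0∞) ^ 2) =ᵐ[volume]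
      (Ioc c₀ (c₀ + T)).indicator (fun x => (‖h x‖₊ : ℝ≥0∞) ^ 2) := by
    filter_upwards [hvan] with x hx
    by_cases hmem : x ∈ Ioc c₀ (c₀ + T)
    · simp [hmem]
    · simp [hmem, hx hmem]
  have hIoc : (∫⁻ x in Ioc c₀ (c₀ + T), (‖h x‖₊ : ℝ≥0∞) ^ 2) = ∫⁻ x, (‖h x‖₊ : ℝ≥0∞) ^ 2 := by
    rw [lintegral_congr_ae hvan', lintegral_indicator measurableSet_Ioc]
  have hcirc : (∫⁻ t : AddCircle T, (‖H t‖₊ : ℝ≥0∞) ^ 2) = ∫⁻ x, (‖h x‖₊ : ℝ≥0∞) ^ 2 := by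
    rw [← AddCircle.lintegral_preimage T c₀ (fun t => (‖H t‖₊ : ℝ≥0∞) ^ 2), ← hIoc]
    refine setLIntegral_congr_fun measurableSet_Ioc (fun x hx => ?_)
    rw [hH, AddCircle.liftIoc_coe_apply hx]
  have hT0 : ENNReal.ofReal T ≠ 0 := (ENNReal.ofReal_pos.2 hT).ne'
  have hmeasure : (volume : Measure (AddCircle T)) = ENNReal.ofReal T • haarAddCircle :=
    volume_eq_smul_haarAddCircle
  have hhaar : (∫⁻ t, (‖H t‖₊ : ℝ≥0∞) ^ 2 ∂haarAddCircle)
      = (ENNReal.ofReal T)⁻¹ * ∫⁻ x, (‖h x‖₊ : ℝ≥0∞) ^ 2 := by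
    have h1 := hcirc
    rw [hmeasure, lintegral_smul_measure, smul_eq_mul] at h1
    rw [← h1, ← mul_assoc, ENNReal.inv_mul_cancel hT0 ENNReal.ofReal_ne_top, one_mul]
  have hmemH : MemLp H 2 haarAddCircle := by
    refine memℒp_two_of Hmeas.aestronglyMeasurable ?_
    rw [hhaar]
    exact ENNReal.mul_ne_top (ENNReal.inv_ne_top.2 hT0) hfin
  set H₀ := hmemH.toLp H with hH₀
  have hcoe : (H₀ : AddCircle T → ℂ) =ᵐ[haarAddCircle] H := hmemH.coeFn_toLp
  have hfc : ∀ i : ℤ, fourierCoeff (H₀ : AddCircle T → ℂ) i = fourierCoeff H i := by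
    intro i
    exact integral_congr_ae (hcoe.mono fun x hx => by dsimp only; rw [hx])
  have hsummable : Summable (fun i : ℤ => ‖fourierCoeff H i‖ ^ 2) := by
    have h1 : Memℓp (fourierBasis.repr H₀) 2 := lp.memℓp _
    have h2 := h1.summable (by norm_num)
    have h3 : ∀ i : ℤ, ‖fourierBasis.repr H₀ i‖ ^ (2 : ℝ≥0∞).toReal = ‖fourierCoeff H i‖ ^ 2 := by
      intro i
      rw [fourierBasis_repr, hfc]
      have : (2 : ℝ≥0∞).toReal = ((2 : ℕ) : ℝ) := by norm_num
      rw [this, Real.rpow_natCast]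
    simpa only [h3] using h2
  have parseval := tsum_sq_fourierCoeff H₀
  have hintH : Integrable (fun t => ‖H t‖ ^ 2) haarAddCircle := by
    have := hmemH.integrable_norm_rpow (by norm_num) (by norm_num)
    have h4 : ∀ t, ‖H t‖ ^ (2 : ℝ≥0∞).toReal = ‖H t‖ ^ 2 := fun t => by
      have : (2 : ℝ≥0∞).toReal = ((2 : ℕ) : ℝ) := by norm_num
      rw [this, Real.rpow_natCast]
    simpa only [h4] using this
  have hofReal : ENNReal.ofReal (∫ t, ‖H t‖ ^ 2 ∂haarAddCircle)
      = ∫⁻ t, (‖H t‖₊ : ℝ≥0∞) ^ 2 ∂haarAddCircle := by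
    rw [ofReal_integral_eq_lintegral_ofReal hintH (ae_of_all _ fun t => sq_nonneg _)]
    congr 1
    funext t
    rw [ENNReal.ofReal_pow (norm_nonneg _), ofReal_norm, enorm_eq_nnnorm]
  have hcoeff : ∀ m : ℤ, (∫ x : ℝ, (fourier (T := T) m (x : AddCircle T)) * h x)
      = T • fourierCoeff H (-m) := by
    intro m
    have e1 : (∫ x : ℝ, (fourier (T := T) m (x : AddCircle T)) * h x)
        = ∫ x in Ioc c₀ (c₀ + T), (fourier (T := T) m (x : AddCircle T)) * h x :=
      (setIntegral_eq_integral_of_ae_compl_eq_zero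
        (hvan.mono fun x hx hnx => by rw [hx hnx, mul_zero])).symm
    have e2 : (∫ x in Ioc c₀ (c₀ + T), (fourier (T := T) m (x : AddCircle T)) * h x)
        = ∫ x in Ioc c₀ (c₀ + T), (fun t : AddCircle T => fourier m t * H t) (x : AddCircle T) := by
      refine setIntegral_congr_fun measurableSet_Ioc fun x hx => ?_
      simp only [hH, AddCircle.liftIoc_coe_apply hx]
    have e3 := AddCircle.integral_preimage T c₀ (fun t : AddCircle T => fourier m t * H t)
    have e4 : (∫ t : AddCircle T, fourier m t * H t)
        = T • ∫ t, fourier m t * H t ∂haarAddCircle := by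
      rw [hmeasure, integral_smul_measure, ENNReal.toReal_ofReal hT.le]
    have e5 : fourierCoeff H (-m) = ∫ t, fourier m t * H t ∂haarAddCircle := by
      rw [fourierCoeff, neg_neg]
      simp [smul_eq_mul]
    rw [e1, e2, e3, e4, e5]
  have hTnn : (‖T‖₊ : ℝ≥0∞) = ENNReal.ofReal T := by
    rw [← ENNReal.ofReal_coe_nnreal, coe_nnnorm, Real.norm_of_nonneg hT.le]
  calc ∑' m : ℤ, (‖∫ x : ℝ, (fourier (T := T) m (x : AddCircle T)) * h x‖₊ : ℝ≥0∞) ^ 2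
      = ∑' m : ℤ, (ENNReal.ofReal T) ^ 2 * (‖fourierCoeff H (-m)‖₊ : ℝ≥0∞) ^ 2 := by
        refine tsum_congr fun m => ?_
        rw [hcoeff m, nnnorm_smul, ENNReal.coe_mul, hTnn, mul_pow]
    _ = (ENNReal.ofReal T) ^ 2 * ∑' m : ℤ, (‖fourierCoeff H (-m)‖₊ : ℝ≥0∞) ^ 2 :=
        ENNReal.tsum_mul_left
    _ = (ENNReal.ofReal T) ^ 2 * ∑' m : ℤ, (‖fourierCoeff H m‖₊ : ℝ≥0∞) ^ 2 := by
        congr 1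
        exact (Equiv.neg ℤ).tsum_eq fun m => (‖fourierCoeff H m‖₊ : ℝ≥0∞) ^ 2
    _ = (ENNReal.ofReal T) ^ 2 * ENNReal.ofReal (∑' m : ℤ, ‖fourierCoeff H m‖ ^ 2) := by
        congr 1
        rw [ENNReal.ofReal_tsum_of_nonneg (fun m => sq_nonneg _) hsummable]
        refine tsum_congr fun m => ?_
        rw [ENNReal.ofReal_pow (norm_nonneg _), ofReal_norm, enorm_eq_nnnorm]
    _ = (ENNReal.ofReal T) ^ 2 * ∫⁻ t, (‖H t‖₊ : ℝ≥0∞) ^ 2 ∂haarAddCircle := by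
        congr 1
        rw [← hofReal]
        congr 1
        rw [show (∫ t, ‖H t‖ ^ 2 ∂haarAddCircle)
            = ∫ t, ‖(H₀ : AddCircle T → ℂ) t‖ ^ 2 ∂haarAddCircle from
          integral_congr_ae (hcoe.mono fun x hx => by dsimp only; rw [hx]), ← parseval]
        exact (tsum_congr fun i => by rw [hfc]).symm
    _ = ENNReal.ofReal T * ∫⁻ x, (‖h x‖₊ : ℝ≥0∞) ^ 2 := by
        rw [hhaar, sq, mul_assoc, ← mul_assoc (ENNReal.ofReal T) (ENNReal.ofReal T)⁻¹,
          ENNReal.mul_inv_cancel hT0 ENNReal.ofReal_ne_top, one_mul]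

open AddCircle in
lemma ae_comp_pred {φ : ℝ → ℝ} (hφ : MeasurePreserving φ (volume : Measure ℝ) volume)
    {P : ℝ → Prop} (hP : ∀ᵐ y : ℝ, P y) : ∀ᵐ x : ℝ, P (φ x) :=
  ae_of_ae_map hφ.measurable.aemeasurable (hφ.map_eq.symm ▸ hP)

/-- **Corollary 2.2 (sufficiency)**. If `g` vanishes a.e. outside an interval of
length `≤ 1/b` and `bA ≤ G(x) ≤ bB` a.e. on `ℝ - N_G`, then `{E_{mb} T_{na} g}`
is a frame for `L²(ℝ - N_G)` with bounds `A, B`; in particular it is a frame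
sequence with bounds `A, B`. -/
theorem wh_compact_support_frame
    (g : ℝ → ℂ) (hg : MemLp g 2 (volume : Measure ℝ)) (a b A B : ℝ)
    (ha : 0 < a) (hb : 0 < b) (hA : 0 < A) (hB : 0 < B)
    (hsupp : ∃ c d : ℝ, d - c ≤ 1 / b ∧ ∀ᵐ x : ℝ, x ∉ Set.Icc c d → g x = 0)
    (hG : ∀ᵐ x : ℝ, Gfun g a x ≠ 0 →
      ENNReal.ofReal (b * A) ≤ Gfun g a x ∧ Gfun g a x ≤ ENNReal.ofReal (b * B))
    (F : ℤ × ℤ → Lp ℂ 2 (volume : Measure ℝ))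
    (hF : ∀ p : ℤ × ℤ, (F p : ℝ → ℂ) =ᵐ[volume] whFun g a b p.1 p.2) :
    IsFrameWithFor F A B {f : Lp ℂ 2 (volume : Measure ℝ) |
        ∀ᵐ x : ℝ, Gfun g a x = 0 → (f : ℝ → ℂ) x = 0} ∧
      IsFrameSeqWith F A B := by
  obtain ⟨c, d, hcd, hgvan⟩ := hsupp
  set T : ℝ := 1 / b with hTdef
  have hT : 0 < T := by positivity
  haveI : Fact (0 < T) := ⟨hT⟩
  obtain ⟨g', hg'meas, hgg'⟩ := hg.aestronglyMeasurable
  have htrans : ∀ n : ℤ, ∀ᵐ x : ℝ, g (x - (n : ℝ) * a) = g' (x - (n : ℝ) * a) := fun n =>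
    ae_comp_pred (measurePreserving_sub_right (volume : Measure ℝ) ((n : ℝ) * a)) hgg'
  have hGfun : ∀ᵐ x : ℝ, Gfun g a x = Gfun g' a x := by
    have hall : ∀ᵐ x : ℝ, ∀ n : ℤ, g (x - (n : ℝ) * a) = g' (x - (n : ℝ) * a) :=
      ae_all_iff.2 htrans
    filter_upwards [hall] with x hx
    exact tsum_congr fun n => by rw [hx n]
  have hnorm : ∀ f : Lp ℂ 2 (volume : Measure ℝ),
      (∫⁻ x, (‖(f : ℝ → ℂ) x‖₊ : ℝ≥0∞) ^ 2) = ENNReal.ofReal (‖f‖ ^ 2) := by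
    intro f
    rw [lintegral_sq_nnnorm_eq, Lp.norm_def, ← ENNReal.toReal_pow, ENNReal.ofReal_toReal]
    exact ENNReal.pow_ne_top (Lp.eLpNorm_ne_top f)
  have hVbound : ∀ f : Lp ℂ 2 (volume : Measure ℝ),
      (∀ᵐ x : ℝ, Gfun g a x = 0 → (f : ℝ → ℂ) x = 0) →
      ENNReal.ofReal (b * A) * ENNReal.ofReal (‖f‖ ^ 2)
          ≤ (∫⁻ x, (‖(f : ℝ → ℂ) x‖₊ : ℝ≥0∞) ^ 2 * Gfun g' a x) ∧
      (∫⁻ x, (‖(f : ℝ → ℂ) x‖₊ : ℝ≥0∞) ^ 2 * Gfun g' a x)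
          ≤ ENNReal.ofReal (b * B) * ENNReal.ofReal (‖f‖ ^ 2) := by
    intro f hf
    have hub : ∀ᵐ x : ℝ, (‖(f : ℝ → ℂ) x‖₊ : ℝ≥0∞) ^ 2 * Gfun g' a x
        ≤ ENNReal.ofReal (b * B) * (‖(f : ℝ → ℂ) x‖₊ : ℝ≥0∞) ^ 2 := by
      filter_upwards [hf, hG, hGfun] with x h1 h2 h3
      rw [← h3]
      by_cases h0 : Gfun g a x = 0
      · simp [h0, h1 h0]
      · rw [mul_comm]
        exact mul_le_mul_left (h2 h0).2 _
    have hlb : ∀ᵐ x : ℝ, ENNReal.ofReal (b * A) * (‖(f : ℝ → ℂ) x‖₊ : ℝ≥0∞) ^ 2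
        ≤ (‖(f : ℝ → ℂ) x‖₊ : ℝ≥0∞) ^ 2 * Gfun g' a x := by
      filter_upwards [hf, hG, hGfun] with x h1 h2 h3
      rw [← h3]
      by_cases h0 : Gfun g a x = 0
      · simp [h0, h1 h0]
      · rw [mul_comm]
        exact mul_le_mul_right (h2 h0).1 _
    constructor
    · rw [← hnorm f, ← lintegral_const_mul' _ _ ENNReal.ofReal_ne_top]
      exact lintegral_mono_ae hlb
    · rw [← hnorm f, ← lintegral_const_mul' _ _ ENNReal.ofReal_ne_top]
      exact lintegral_mono_ae hub
  have part1 : IsFrameWithFor F A B {f : Lp ℂ 2 (volume : Measure ℝ) |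
      ∀ᵐ x : ℝ, Gfun g a x = 0 → (f : ℝ → ℂ) x = 0} := by
    intro f hf
    simp only [Set.mem_setOf_eq] at hf
    set φ : ℤ → ℝ → ℂ :=
      fun n x => (starRingEnd ℂ) ((f : ℝ → ℂ) x) * g' (x - (n : ℝ) * a) with hφdef
    have hφm : ∀ n : ℤ, StronglyMeasurable (φ n) := fun n =>
      ((continuous_star.measurable.comp (Lp.stronglyMeasurable f).measurable).mul
        (hg'meas.measurable.comp (measurable_id.sub_const _))).stronglyMeasurable
    have hφnorm : ∀ n (x : ℝ), (‖φ n x‖₊ : ℝ≥0∞) ^ 2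
        = (‖(f : ℝ → ℂ) x‖₊ : ℝ≥0∞) ^ 2 * (‖g' (x - (n : ℝ) * a)‖₊ : ℝ≥0∞) ^ 2 := by
      intro n x
      rw [hφdef]
      simp only [nnnorm_mul, RCLike.nnnorm_conj, ENNReal.coe_mul, mul_pow]
    have hsum_fin : (∫⁻ x, (‖(f : ℝ → ℂ) x‖₊ : ℝ≥0∞) ^ 2 * Gfun g' a x) ≠ ∞ :=
      ((hVbound f hf).2.trans_lt (by
        exact ENNReal.mul_lt_top ENNReal.ofReal_lt_top ENNReal.ofReal_lt_top)).ne
    have hφfin : ∀ n : ℤ, (∫⁻ x, (‖φ n x‖₊ : ℝ≥0∞) ^ 2) ≠ ∞ := by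
      intro n
      refine ne_top_of_le_ne_top hsum_fin (lintegral_mono fun x => ?_)
      rw [hφnorm]
      exact mul_le_mul_right (ENNReal.le_tsum n) _
    have hg'van : ∀ᵐ x : ℝ, x ∉ Set.Icc c d → g' x = 0 := by
      filter_upwards [hgvan, hgg'] with x h1 h2 hx
      rw [← h2]; exact h1 hx
    have hφvan : ∀ n : ℤ, ∀ᵐ x : ℝ,
        x ∉ Ioc (d + (n : ℝ) * a - T) (d + (n : ℝ) * a - T + T) → φ n x = 0 := by
      intro n
      have h1 : ∀ᵐ x : ℝ, (x - (n : ℝ) * a) ∉ Set.Icc c d → g' (x - (n : ℝ) * a) = 0 :=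
        ae_comp_pred (measurePreserving_sub_right (volume : Measure ℝ) ((n : ℝ) * a)) hg'van
      have h2 : ∀ᵐ x : ℝ, x ≠ d + (n : ℝ) * a - T := by
        rw [ae_iff]
        have : {x : ℝ | ¬x ≠ d + (n : ℝ) * a - T} = {d + (n : ℝ) * a - T} := by
          ext x; simp
        rw [this]
        exact measure_singleton _
      filter_upwards [h1, h2] with x hx1 hx2 hx
      rw [hφdef]
      dsimp only
      rw [hx1 ?_, mul_zero]
      intro hmem
      rcases hmem with ⟨hc1, hc2⟩
      refine hx ⟨?_, by linarith⟩
      have hle : d + (n : ℝ) * a - T ≤ x := by linarith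
      exact lt_of_le_of_ne hle (Ne.symm hx2)
    have hinner : ∀ p : ℤ × ℤ, (inner ℂ f (F p) : ℂ)
        = ∫ x : ℝ, (fourier (T := T) p.1 (x : AddCircle T)) * φ p.2 x := by
      intro p
      rw [MeasureTheory.L2.inner_def]
      refine integral_congr_ae ?_
      filter_upwards [hF p, htrans p.2] with x h1 h2
      rw [RCLike.inner_apply, h1]
      show whFun g a b p.1 p.2 x * (starRingEnd ℂ) ((f : ℝ → ℂ) x) = _
      rw [whFun, hφdef]
      dsimp only
      rw [← h2, fourier_coe_apply]
      have hb0 : (b : ℂ) ≠ 0 := Complex.ofReal_ne_zero.2 hb.ne'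
      have hexp : Complex.exp (2 * ↑Real.pi * Complex.I * (p.1 : ℂ) * (x : ℂ) / (T : ℂ))
          = Complex.exp (2 * ↑Real.pi * Complex.I * ((p.1 : ℂ) * (b : ℂ)) * (x : ℂ)) := by
        congr 1
        rw [hTdef]
        push_cast
        field_simp
      rw [hexp]
      ring
    have keyn : ∀ n : ℤ, (∑' m : ℤ, (‖(inner ℂ f (F (m, n)) : ℂ)‖₊ : ℝ≥0∞) ^ 2)
        = ENNReal.ofReal T * ∫⁻ x, (‖φ n x‖₊ : ℝ≥0∞) ^ 2 := by
      intro n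
      rw [← parseval_interval hT (d + (n : ℝ) * a - T) (φ n) (hφm n) (hφfin n) (hφvan n)]
      exact tsum_congr fun m => by rw [hinner (m, n)]
    have total : (∑' p : ℤ × ℤ, (‖(inner ℂ f (F p) : ℂ)‖₊ : ℝ≥0∞) ^ 2)
        = ENNReal.ofReal T * ∫⁻ x, (‖(f : ℝ → ℂ) x‖₊ : ℝ≥0∞) ^ 2 * Gfun g' a x := by
      have e0 : (∑' p : ℤ × ℤ, (‖(inner ℂ f (F p) : ℂ)‖₊ : ℝ≥0∞) ^ 2)
          = ∑' m : ℤ, ∑' n : ℤ, (‖(inner ℂ f (F (m, n)) : ℂ)‖₊ : ℝ≥0∞) ^ 2 :=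
        ENNReal.tsum_prod (f := fun m n => (‖(inner ℂ f (F (m, n)) : ℂ)‖₊ : ℝ≥0∞) ^ 2)
      rw [e0, ENNReal.tsum_comm]
      calc (∑' n : ℤ, ∑' m : ℤ, (‖(inner ℂ f (F (m, n)) : ℂ)‖₊ : ℝ≥0∞) ^ 2)
          = ∑' n : ℤ, ENNReal.ofReal T * ∫⁻ x, (‖φ n x‖₊ : ℝ≥0∞) ^ 2 := tsum_congr keyn
        _ = ENNReal.ofReal T * ∑' n : ℤ, ∫⁻ x, (‖φ n x‖₊ : ℝ≥0∞) ^ 2 := ENNReal.tsum_mul_left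
        _ = ENNReal.ofReal T * ∫⁻ x, ∑' n : ℤ, (‖φ n x‖₊ : ℝ≥0∞) ^ 2 := by
            rw [← lintegral_tsum fun n =>
              (((hφm n).measurable.nnnorm).coe_nnreal_ennreal.pow_const 2).aemeasurable]
        _ = ENNReal.ofReal T * ∫⁻ x, (‖(f : ℝ → ℂ) x‖₊ : ℝ≥0∞) ^ 2 * Gfun g' a x := by
            congr 1
            refine lintegral_congr fun x => ?_
            rw [Gfun, ENNReal.tsum_mul_left.symm]
            exact tsum_congr fun n => hφnorm n x
    obtain ⟨hlow, hup⟩ := hVbound f hf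
    set S := ∑' p : ℤ × ℤ, (‖(inner ℂ f (F p) : ℂ)‖₊ : ℝ≥0∞) ^ 2 with hS
    have hTA : ENNReal.ofReal T * ENNReal.ofReal (b * A) = ENNReal.ofReal A := by
      rw [← ENNReal.ofReal_mul hT.le]
      congr 1
      rw [hTdef]; field_simp
    have hTB : ENNReal.ofReal T * ENNReal.ofReal (b * B) = ENNReal.ofReal B := by
      rw [← ENNReal.ofReal_mul hT.le]
      congr 1
      rw [hTdef]; field_simp
    have hSle : S ≤ ENNReal.ofReal B * ENNReal.ofReal (‖f‖ ^ 2) := by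
      rw [total]
      calc ENNReal.ofReal T * ∫⁻ x, (‖(f : ℝ → ℂ) x‖₊ : ℝ≥0∞) ^ 2 * Gfun g' a x
          ≤ ENNReal.ofReal T * (ENNReal.ofReal (b * B) * ENNReal.ofReal (‖f‖ ^ 2)) :=
            mul_le_mul_right hup _
        _ = ENNReal.ofReal B * ENNReal.ofReal (‖f‖ ^ 2) := by rw [← mul_assoc, hTB]
    have hSge : ENNReal.ofReal A * ENNReal.ofReal (‖f‖ ^ 2) ≤ S := by
      rw [total, ← hTA, mul_assoc]
      exact mul_le_mul_right hlow _
    have hSfin : S ≠ ∞ :=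
      (hSle.trans_lt (ENNReal.mul_lt_top ENNReal.ofReal_lt_top ENNReal.ofReal_lt_top)).ne
    have hreal : (∑' p : ℤ × ℤ, ‖(inner ℂ f (F p) : ℂ)‖ ^ 2) = S.toReal := by
      rw [hS, ENNReal.tsum_toReal_eq fun p => by
        exact ENNReal.pow_ne_top ENNReal.coe_ne_top]
      exact tsum_congr fun p => by
        rw [ENNReal.toReal_pow, ENNReal.coe_toReal, coe_nnnorm]
    constructor
    · rw [hreal]
      have h5 := ENNReal.toReal_mono hSfin hSge
      rwa [ENNReal.toReal_mul, ENNReal.toReal_ofReal hA.le,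
        ENNReal.toReal_ofReal (sq_nonneg _)] at h5
    · rw [hreal]
      have h5 := ENNReal.toReal_mono
        (ENNReal.mul_lt_top ENNReal.ofReal_lt_top ENNReal.ofReal_lt_top).ne hSle
      rwa [ENNReal.toReal_mul, ENNReal.toReal_ofReal hB.le,
        ENNReal.toReal_ofReal (sq_nonneg _)] at h5
  refine ⟨part1, ?_⟩
  -- Part 2: frame sequence
  set V : Set (Lp ℂ 2 (volume : Measure ℝ)) :=
    {f : Lp ℂ 2 (volume : Measure ℝ) | ∀ᵐ x : ℝ, Gfun g a x = 0 → (f : ℝ → ℂ) x = 0} with hV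
  set Sset : Set ℝ := {x : ℝ | Gfun g' a x = 0} with hSset
  have hSmeas : MeasurableSet Sset := by
    have hGm : Measurable (Gfun g' a) := by
      refine Measurable.ennreal_tsum fun n => ?_
      exact ((hg'meas.measurable.comp (measurable_id.sub_const _)).nnnorm.coe_nnreal_ennreal).pow_const 2
    exact hGm (measurableSet_singleton 0)
  have hres : ae (volume.restrict Sset) ≤ ae (volume : Measure ℝ) :=
    ae_mono Measure.restrict_le_self
  have hmemV : ∀ f : Lp ℂ 2 (volume : Measure ℝ),
      f ∈ V ↔ (f : ℝ → ℂ) =ᵐ[volume.restrict Sset] 0 := by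
    intro f
    rw [hV, Set.mem_setOf_eq, EventuallyEq, ae_restrict_iff' hSmeas]
    constructor
    · intro h
      filter_upwards [h, hGfun] with x h1 h2 hx
      exact h1 (h2.trans hx)
    · intro h
      filter_upwards [h, hGfun] with x h1 h2 hx
      exact h1 (show x ∈ Sset from by rw [hSset, Set.mem_setOf_eq, ← h2]; exact hx)
  have hVclosed : IsClosed V := by
    refine isClosed_of_closure_subset fun f hf => ?_
    have haesm : AEStronglyMeasurable (f : ℝ → ℂ) (volume.restrict Sset) :=
      (Lp.aestronglyMeasurable f).restrict
    have hzero : eLpNorm (f : ℝ → ℂ) 2 (volume.restrict Sset) = 0 := by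
      have hbound : ∀ ε : ℝ, 0 < ε →
          eLpNorm (f : ℝ → ℂ) 2 (volume.restrict Sset) ≤ ENNReal.ofReal ε := by
        intro ε hε
        obtain ⟨v, hvV, hdist⟩ := Metric.mem_closure_iff.1 hf ε hε
        have hv0 : eLpNorm (v : ℝ → ℂ) 2 (volume.restrict Sset) = 0 := by
          rw [eLpNorm_congr_ae ((hmemV v).1 hvV)]
          exact eLpNorm_zero
        have htri : eLpNorm (f : ℝ → ℂ) 2 (volume.restrict Sset)
            ≤ eLpNorm ((f : ℝ → ℂ) - (v : ℝ → ℂ)) 2 (volume.restrict Sset)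
              + eLpNorm (v : ℝ → ℂ) 2 (volume.restrict Sset) := by
          have hfe : (f : ℝ → ℂ) = ((f : ℝ → ℂ) - (v : ℝ → ℂ)) + (v : ℝ → ℂ) := by
            funext x; simp
          nth_rewrite 1 [hfe]
          exact eLpNorm_add_le (haesm.sub (Lp.aestronglyMeasurable v).restrict)
            (Lp.aestronglyMeasurable v).restrict (by norm_num)
        rw [hv0, add_zero] at htri
        refine htri.trans ?_
        calc eLpNorm ((f : ℝ → ℂ) - (v : ℝ → ℂ)) 2 (volume.restrict Sset)
            ≤ eLpNorm ((f : ℝ → ℂ) - (v : ℝ → ℂ)) 2 volume :=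
              eLpNorm_mono_measure _ Measure.restrict_le_self
          _ = eLpNorm ((f - v : Lp ℂ 2 (volume : Measure ℝ)) : ℝ → ℂ) 2 volume :=
              (eLpNorm_congr_ae (Lp.coeFn_sub f v)).symm
          _ = ENNReal.ofReal ‖f - v‖ := by
              rw [Lp.norm_def, ENNReal.ofReal_toReal (Lp.eLpNorm_ne_top _)]
          _ ≤ ENNReal.ofReal ε := by
              refine ENNReal.ofReal_le_ofReal ?_
              rw [← dist_eq_norm]
              exact hdist.le
      refine le_antisymm ?_ zero_le
      refine ENNReal.le_of_forall_pos_le_add fun ε hε _ => ?_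
      rw [zero_add]
      calc eLpNorm (f : ℝ → ℂ) 2 (volume.restrict Sset)
          ≤ ENNReal.ofReal (ε : ℝ) := hbound ε (by exact_mod_cast hε)
        _ ≤ (ε : ℝ≥0∞) := by rw [ENNReal.ofReal_coe_nnreal]
    exact (hmemV f).2 ((eLpNorm_eq_zero_iff haesm (by norm_num)).1 hzero)
  have hrange : Set.range F ⊆ V := by
    rintro _ ⟨p, rfl⟩
    rw [hV, Set.mem_setOf_eq]
    filter_upwards [hF p] with x h1 h0
    rw [h1, whFun]
    have hterm : (‖g (x - (p.2 : ℝ) * a)‖₊ : ℝ≥0∞) ^ 2 ≤ Gfun g a x := ENNReal.le_tsum p.2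
    rw [h0, le_zero_iff] at hterm
    have hzero : g (x - (p.2 : ℝ) * a) = 0 := by
      have := pow_eq_zero_iff (n := 2) (by norm_num) |>.1 hterm
      simpa using this
    rw [hzero, mul_zero]
  have hW : ∃ W : Submodule ℂ (Lp ℂ 2 (volume : Measure ℝ)), (W : Set _) = V := by
    refine ⟨{ carrier := V
              add_mem' := fun {u v} hu hv => ?_
              zero_mem' := ?_
              smul_mem' := fun r u hu => ?_ }, rfl⟩
    · rw [hmemV] at hu hv ⊢
      have h1 := (Lp.coeFn_add u v).filter_mono hres
      filter_upwards [h1, hu, hv] with x e1 e2 e3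
      simp only [Pi.add_apply, Pi.zero_apply] at *
      rw [e1, e2, e3, add_zero]
    · refine (hmemV 0).2 ?_
      exact (Lp.coeFn_zero ℂ 2 volume).filter_mono hres
    · rw [hmemV] at hu ⊢
      have h1 := (Lp.coeFn_smul r u).filter_mono hres
      filter_upwards [h1, hu] with x e1 e2
      simp only [Pi.smul_apply, Pi.zero_apply] at *
      rw [e1, e2, smul_zero]
  obtain ⟨W, hWV⟩ := hW
  have hsub : closure ((Submodule.span ℂ (Set.range F) : Submodule ℂ _) :
      Set (Lp ℂ 2 (volume : Measure ℝ))) ⊆ V := by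
    refine closure_minimal ?_ hVclosed
    have : Submodule.span ℂ (Set.range F) ≤ W :=
      Submodule.span_le.2 (by rw [hWV]; exact hrange)
    intro x hx
    rw [← hWV]
    exact this hx
  intro f hf
  exact part1 f (hsub hf)
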